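/- Let k be a positive integer, let r and s be positive real numbers, and let w : ℝ → ℝ be a Horadam function with period k, i.e. w(x+2k) = r·w(x+k) + s·w(x) for all real x. Assume w(x) ≠ 0 for all real x and w(x+k)/w(x) ≠ (r - √(r² + 4s))/2 for all real x. Then for every real number x, the sequence n ↦ w(x+(n+1)k)/w(x+nk) converges to ρ := (r + √(r² + 4s))/2 as n → ∞. -/

import Mathlib

theorem stmt_13 (k : ℕ) (hk : 0 < k) (r s : ℝ) (hr : 0 < r) (hs : 0 < s)
    (w : ℝ → ℝ)
    (hw : ∀ x : ℝ, w (x + 2 * (k : ℝ)) = r * w (x + (k : ℝ)) + s * w x)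
    (hne : ∀ x : ℝ, w x ≠ 0)
    (hratio : ∀ x : ℝ, w (x + (k : ℝ)) / w x ≠ (r - Real.sqrt (r ^ 2 + 4 * s)) / 2) :
    ∀ x : ℝ,
      Filter.Tendsto (fun n : ℕ => w (x + ((n : ℝ) + 1) * (k : ℝ)) / w (x + (n : ℝ) * (k : ℝ)))
        Filter.atTop (nhds ((r + Real.sqrt (r ^ 2 + 4 * s)) / 2)) := by
  intro x
  set d : ℝ := Real.sqrt (r ^ 2 + 4 * s) with hddef
  have hpos : (0:ℝ) < r ^ 2 + 4 * s := by positivity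
  have hd : 0 < d := Real.sqrt_pos.2 hpos
  have hd2 : d ^ 2 = r ^ 2 + 4 * s := Real.sq_sqrt (le_of_lt hpos)
  have hdr : r < d := by nlinarith [hd, hd2]
  set ρ : ℝ := (r + d) / 2 with hρdef
  set σ : ℝ := (r - d) / 2 with hσdef
  have hρpos : 0 < ρ := by rw [hρdef]; positivity
  have hsum : ρ + σ = r := by rw [hρdef, hσdef]; ring
  have hdiff : ρ - σ = d := by rw [hρdef, hσdef]; ring
  have hprod : ρ * σ = -s := by
    rw [hρdef, hσdef]; linear_combination (-1/4 : ℝ) * hd2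
  have hσneg : σ < 0 := by rw [hσdef]; linarith
  have habs : |σ / ρ| < 1 := by
    rw [abs_div, abs_of_pos hρpos, div_lt_one hρpos, abs_of_neg hσneg]
    rw [hρdef, hσdef]; linarith
  clear_value d ρ σ
  set a : ℕ → ℝ := fun n => w (x + (n : ℝ) * (k : ℝ)) with hadef
  have hane : ∀ n, a n ≠ 0 := fun n => hne _
  have harec : ∀ n : ℕ, a (n + 2) = r * a (n + 1) + s * a n := by
    intro n
    have e2 : x + (n : ℝ) * (k : ℝ) + 2 * (k : ℝ) = x + ((n + 2 : ℕ) : ℝ) * (k : ℝ) := by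
      push_cast; ring
    have e1 : x + (n : ℝ) * (k : ℝ) + (k : ℝ) = x + ((n + 1 : ℕ) : ℝ) * (k : ℝ) := by
      push_cast; ring
    have h := hw (x + (n : ℝ) * (k : ℝ))
    rw [e1, e2] at h
    exact h
  set A : ℝ := (a 1 - σ * a 0) / d with hAdef
  set B : ℝ := (ρ * a 0 - a 1) / d with hBdef
  have hAB : A + B = a 0 := by
    rw [hAdef, hBdef, ← add_div, div_eq_iff (ne_of_gt hd)]
    linear_combination a 0 * hdiff
  have hAB1 : A * ρ + B * σ = a 1 := by
    rw [hAdef, hBdef, div_mul_eq_mul_div, div_mul_eq_mul_div, ← add_div,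
      div_eq_iff (ne_of_gt hd)]
    linear_combination a 1 * hdiff
  clear_value A B
  have key : ∀ n : ℕ, a n = A * ρ ^ n + B * σ ^ n := by
    intro n
    induction n using Nat.twoStepInduction with
    | zero => simpa using hAB.symm
    | one => simpa using hAB1.symm
    | more n ih1 ih2 =>
        rw [harec n, ih1, ih2]
        have hρ2 : ρ ^ 2 = r * ρ + s := by nlinarith [hsum, hprod]
        have hσ2 : σ ^ 2 = r * σ + s := by nlinarith [hsum, hprod]
        have e1 : ρ ^ (n + 2) = (r * ρ + s) * ρ ^ n := by rw [← hρ2]; ring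
        have e2 : σ ^ (n + 2) = (r * σ + s) * σ ^ n := by rw [← hσ2]; ring
        rw [e1, e2]; ring
  have hA : A ≠ 0 := by
    intro h
    apply hratio x
    have ha0 : a 0 = w x := by simp [hadef]
    have ha1 : a 1 = w (x + (k : ℝ)) := by simp [hadef]
    have h0 : w x ≠ 0 := hne x
    rw [hAdef, div_eq_iff (ne_of_gt hd), zero_mul, sub_eq_zero] at h
    rw [← ha1, ← ha0, h, ha0, mul_div_assoc, div_self h0, mul_one]
  have hlim0 : Filter.Tendsto (fun n : ℕ => (σ / ρ) ^ n) Filter.atTop (nhds 0) :=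
    tendsto_pow_atTop_nhds_zero_of_abs_lt_one habs
  have hlimden : Filter.Tendsto (fun n : ℕ => A + B * (σ / ρ) ^ n) Filter.atTop (nhds A) := by
    have := (hlim0.const_mul B).const_add A
    simpa using this
  have hlimnum : Filter.Tendsto (fun n : ℕ => A * ρ + B * σ * (σ / ρ) ^ n) Filter.atTop
      (nhds (A * ρ)) := by
    have := (hlim0.const_mul (B * σ)).const_add (A * ρ)
    simpa using this
  have hlim : Filter.Tendsto
      (fun n : ℕ => (A * ρ + B * σ * (σ / ρ) ^ n) / (A + B * (σ / ρ) ^ n))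
      Filter.atTop (nhds ρ) := by
    have h2 := hlimnum.div hlimden hA
    have h3 : A * ρ / A = ρ := by rw [mul_comm, mul_div_assoc, div_self hA, mul_one]
    rw [h3] at h2
    exact h2
  have heq : ∀ n : ℕ, w (x + ((n : ℝ) + 1) * (k : ℝ)) / w (x + (n : ℝ) * (k : ℝ)) =
      (A * ρ + B * σ * (σ / ρ) ^ n) / (A + B * (σ / ρ) ^ n) := by
    intro n
    have hρn : ρ ^ n ≠ 0 := pow_ne_zero n (ne_of_gt hρpos)
    have h1 : w (x + ((n : ℝ) + 1) * (k : ℝ)) = a (n + 1) := by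
      show w _ = w _
      congr 1
      push_cast; ring
    have h2 : w (x + (n : ℝ) * (k : ℝ)) = a n := rfl
    have e : (A + B * (σ / ρ) ^ n) * ρ ^ n = A * ρ ^ n + B * σ ^ n := by
      rw [div_pow]
      field_simp
    have e' : (A * ρ + B * σ * (σ / ρ) ^ n) * ρ ^ n = A * ρ ^ (n + 1) + B * σ ^ (n + 1) := by
      rw [div_pow]
      field_simp
      ring
    rw [h1, h2, key (n + 1), key n, ← e, ← e', mul_div_mul_right _ _ hρn]
  exact (Filter.tendsto_congr heq).2 hlim
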